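/- With ℰ_t = (ℰ−1) − t(ℰ'−1) for i.i.d. standard exponentials and μ_t = (2/e)e^t/(1+t), the function t ↦ E|ℰ_t/μ_t|⁴ is strictly decreasing on [0,1]; explicitly E|ℰ_t|⁴ = 9t⁴ + 6t² + 9, and d/dt(E|ℰ_t/μ_t|⁴) = −12·t(1−t)²(3t²+3t+2)/(μ_t⁴(1+t)). -/

import Mathlib

open MeasureTheory ProbabilityTheory Real Set

/-- Density of a standard exponential random variable. -/
noncomputable def expPDF : ℝ → ℝ := fun x => if 0 < x then Real.exp (-x) else 0

/-- `X` has density `f` with respect to Lebesgue measure. -/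
def HasDensity {Ω : Type*} [MeasurableSpace Ω] (P : Measure Ω) (X : Ω → ℝ) (f : ℝ → ℝ) : Prop :=
  Measurable X ∧ Measure.map X P = volume.withDensity (fun x => ENNReal.ofReal (f x))

open scoped ENNReal NNReal

lemma measurable_expPDF : Measurable expPDF := by
  unfold expPDF
  exact Measurable.ite (measurableSet_lt measurable_const measurable_id)
    (by fun_prop) measurable_const

lemma expPDF_nonneg (x : ℝ) : 0 ≤ expPDF x := by
  unfold expPDF; split <;> positivity

lemma Jint (n : ℕ) : IntegrableOn (fun x => Real.exp (-x) * x ^ n) (Ioi (0:ℝ)) := by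
  have h := Real.GammaIntegral_convergent (show (0:ℝ) < n + 1 by positivity)
  refine h.congr_fun (fun x hx => ?_) measurableSet_Ioi
  rw [show ((n:ℝ) + 1) - 1 = (n:ℝ) by ring]; simp only [Real.rpow_natCast]

lemma Jval (n : ℕ) : ∫ x in Ioi (0:ℝ), Real.exp (-x) * x ^ n = (n.factorial : ℝ) := by
  have h1 := Real.Gamma_nat_eq_factorial n
  rw [Real.Gamma_eq_integral (show (0:ℝ) < n + 1 by positivity)] at h1
  rw [← h1]
  refine setIntegral_congr_fun measurableSet_Ioi (fun x hx => ?_)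
  rw [show ((n:ℝ) + 1) - 1 = (n:ℝ) by ring, Real.rpow_natCast]

lemma Kexpand (k : ℕ) (x : ℝ) : Real.exp (-x) * (x - 1) ^ k =
    ∑ m ∈ Finset.range (k + 1), ((-1:ℝ) ^ (m + k) * k.choose m) * (Real.exp (-x) * x ^ m) := by
  rw [sub_pow]
  rw [Finset.mul_sum]
  congr 1; ext m; ring

lemma Kint (k : ℕ) : IntegrableOn (fun x => Real.exp (-x) * (x - 1) ^ k) (Ioi (0:ℝ)) := by
  refine (integrable_finset_sum _ (fun m _ => ((Jint m).const_mul _))).congr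
    (ae_of_all _ (fun x => (Kexpand k x).symm))

lemma Kval (k : ℕ) : ∫ x in Ioi (0:ℝ), Real.exp (-x) * (x - 1) ^ k =
    ∑ m ∈ Finset.range (k + 1), ((-1:ℝ) ^ (m + k) * k.choose m) * (m.factorial : ℝ) := by
  rw [show (fun x => Real.exp (-x) * (x - 1) ^ k) = fun x =>
      ∑ m ∈ Finset.range (k + 1), ((-1:ℝ) ^ (m + k) * k.choose m) * (Real.exp (-x) * x ^ m)
    from funext (Kexpand k)]
  rw [integral_finset_sum _ (fun m _ => ((Jint m).const_mul _))]
  refine Finset.sum_congr rfl (fun m _ => ?_)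
  rw [MeasureTheory.integral_const_mul, Jval]

lemma indicator_eq (g : ℝ → ℝ) (x : ℝ) :
    expPDF x * g x = (Ioi (0:ℝ)).indicator (fun x => Real.exp (-x) * g x) x := by
  unfold expPDF
  by_cases hx : 0 < x <;> simp [indicator, hx, Set.mem_Ioi]

lemma density_integral {Ω : Type*} [MeasurableSpace Ω] {P : Measure Ω} {X : Ω → ℝ}
    (h : HasDensity P X expPDF) {g : ℝ → ℝ} (hg : Measurable g) :
    ∫ ω, g (X ω) ∂P = ∫ x in Ioi (0:ℝ), Real.exp (-x) * g x := by
  obtain ⟨hm, hmap⟩ := h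
  rw [← integral_map hm.aemeasurable hg.aestronglyMeasurable, hmap]
  rw [show (fun x => ENNReal.ofReal (expPDF x)) = (fun x => ((expPDF x).toNNReal : ℝ≥0∞)) from rfl]
  rw [integral_withDensity_eq_integral_smul measurable_expPDF.real_toNNReal]
  rw [← integral_indicator measurableSet_Ioi]
  congr 1
  ext x
  rw [← indicator_eq, NNReal.smul_def, Real.coe_toNNReal _ (expPDF_nonneg x), smul_eq_mul]

lemma density_integrable {Ω : Type*} [MeasurableSpace Ω] {P : Measure Ω} {X : Ω → ℝ}
    (h : HasDensity P X expPDF) {g : ℝ → ℝ} (hg : Measurable g)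
    (hi : IntegrableOn (fun x => Real.exp (-x) * g x) (Ioi (0:ℝ))) :
    Integrable (fun ω => g (X ω)) P := by
  obtain ⟨hm, hmap⟩ := h
  have : Integrable g (Measure.map X P) := by
    rw [hmap]
    rw [integrable_withDensity_iff measurable_expPDF.ennreal_ofReal (ae_of_all _ fun x => ENNReal.ofReal_lt_top)]
    have : (fun x => g x * (ENNReal.ofReal (expPDF x)).toReal)
        = (Ioi (0:ℝ)).indicator (fun x => Real.exp (-x) * g x) := by
      ext x
      rw [← indicator_eq, ENNReal.toReal_ofReal (expPDF_nonneg x)]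
      ring
    rw [this, integrable_indicator_iff measurableSet_Ioi]
    exact hi
  exact (integrable_map_measure this.aestronglyMeasurable hm.aemeasurable).mp this

lemma mom_integrable {Ω : Type*} [MeasurableSpace Ω] {P : Measure Ω} {X : Ω → ℝ}
    (h : HasDensity P X expPDF) (k : ℕ) : Integrable (fun ω => (X ω - 1) ^ k) P :=
  density_integrable h (g := fun x => (x - 1) ^ k) (by fun_prop) (Kint k)

lemma mom_eq {Ω : Type*} [MeasurableSpace Ω] {P : Measure Ω} {X : Ω → ℝ}
    (h : HasDensity P X expPDF) (k : ℕ) : ∫ ω, (X ω - 1) ^ k ∂P =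
      ∑ m ∈ Finset.range (k + 1), ((-1:ℝ) ^ (m + k) * k.choose m) * (m.factorial : ℝ) := by
  rw [density_integral h (g := fun x => (x - 1) ^ k) (by fun_prop), Kval]

lemma mom1 {Ω : Type*} [MeasurableSpace Ω] {P : Measure Ω} {X : Ω → ℝ}
    (h : HasDensity P X expPDF) : ∫ ω, (X ω - 1) ∂P = 0 := by
  have := mom_eq h 1
  simp only [pow_one] at this
  rw [this]
  norm_num [Finset.sum_range_succ, Nat.factorial, Nat.choose]

lemma mom2 {Ω : Type*} [MeasurableSpace Ω] {P : Measure Ω} {X : Ω → ℝ}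
    (h : HasDensity P X expPDF) : ∫ ω, (X ω - 1) ^ 2 ∂P = 1 := by
  rw [mom_eq h 2]
  norm_num [Finset.sum_range_succ, Nat.factorial, Nat.choose]

lemma mom3 {Ω : Type*} [MeasurableSpace Ω] {P : Measure Ω} {X : Ω → ℝ}
    (h : HasDensity P X expPDF) : ∫ ω, (X ω - 1) ^ 3 ∂P = 2 := by
  rw [mom_eq h 3]
  norm_num [Finset.sum_range_succ, Nat.factorial, Nat.choose]

lemma mom4 {Ω : Type*} [MeasurableSpace Ω] {P : Measure Ω} {X : Ω → ℝ}
    (h : HasDensity P X expPDF) : ∫ ω, (X ω - 1) ^ 4 ∂P = 9 := by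
  rw [mom_eq h 4]
  norm_num [Finset.sum_range_succ, Nat.factorial, Nat.choose]

lemma keyA {Ω : Type*} [MeasurableSpace Ω] (P : Measure Ω) [IsProbabilityMeasure P]
    (E E' : Ω → ℝ) (hE : HasDensity P E expPDF) (hE' : HasDensity P E' expPDF)
    (hind : IndepFun E E' P) (t : ℝ) :
    ∫ ω, ((E ω - 1) - t * (E' ω - 1)) ^ 4 ∂P = 9 * t ^ 4 + 6 * t ^ 2 + 9 := by
  have hX : ∀ i : ℕ, Integrable (fun ω => (E ω - 1) ^ i) P := mom_integrable hE
  have hY : ∀ j : ℕ, Integrable (fun ω => (E' ω - 1) ^ j) P := mom_integrable hE'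
  have hij : ∀ i j : ℕ, IndepFun (fun ω => (E ω - 1) ^ i) (fun ω => (E' ω - 1) ^ j) P := by
    intro i j
    exact hind.comp (φ := fun x => (x - 1) ^ i) (ψ := fun x => (x - 1) ^ j)
      (by fun_prop) (by fun_prop)
  have hmul : ∀ i j : ℕ, Integrable (fun ω => (E ω - 1) ^ i * (E' ω - 1) ^ j) P := by
    intro i j
    exact (hij i j).integrable_mul (hX i) (hY j)
  have hval : ∀ i j : ℕ, ∫ ω, (E ω - 1) ^ i * (E' ω - 1) ^ j ∂P =
      (∫ ω, (E ω - 1) ^ i ∂P) * (∫ ω, (E' ω - 1) ^ j ∂P) :=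
    fun i j => (hij i j).integral_mul_eq_mul_integral (hX i).aestronglyMeasurable (hY j).aestronglyMeasurable
  have expand : (fun ω => ((E ω - 1) - t * (E' ω - 1)) ^ 4) = fun ω =>
      ((((E ω - 1) ^ 4 + (-4 * t) * ((E ω - 1) ^ 3 * (E' ω - 1) ^ 1))
        + (6 * t ^ 2) * ((E ω - 1) ^ 2 * (E' ω - 1) ^ 2))
        + (-4 * t ^ 3) * ((E ω - 1) ^ 1 * (E' ω - 1) ^ 3))
        + (t ^ 4) * ((E' ω - 1) ^ 4) := by
    funext ω; ring
  rw [expand]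
  have i1 := hX 4
  have i2 := (hmul 3 1).const_mul (-4 * t)
  have i3 := (hmul 2 2).const_mul (6 * t ^ 2)
  have i4 := (hmul 1 3).const_mul (-4 * t ^ 3)
  have i5 := (hY 4).const_mul (t ^ 4)
  have e1 := integral_add (((i1.add i2).add i3).add i4) i5
  have e2 := integral_add ((i1.add i2).add i3) i4
  have e3 := integral_add (i1.add i2) i3
  have e4 := integral_add i1 i2
  simp only [Pi.add_apply] at e1 e2 e3 e4
  rw [e1, e2, e3, e4,
      MeasureTheory.integral_const_mul, MeasureTheory.integral_const_mul,
      MeasureTheory.integral_const_mul, MeasureTheory.integral_const_mul,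
      hval 3 1, hval 2 2, hval 1 3]
  have m1 : ∫ ω, (E' ω - 1) ^ 1 ∂P = 0 := by simp only [pow_one]; exact mom1 hE'
  have m1' : ∫ ω, (E ω - 1) ^ 1 ∂P = 0 := by simp only [pow_one]; exact mom1 hE
  rw [mom4 hE, mom4 hE', mom2 hE, mom2 hE', m1, m1']
  ring

noncomputable def Gfun : ℝ → ℝ := fun s =>
  (9 * s ^ 4 + 6 * s ^ 2 + 9) * ((1 + s) ^ 4 * (Real.exp (-(4 * s)) * (Real.exp 1 / 2) ^ 4))

lemma hasD (t : ℝ) : HasDerivAt Gfun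
    ((-12 * t * (1 - t) ^ 2 * (3 * t ^ 2 + 3 * t + 2) * (1 + t) ^ 3) *
      (Real.exp (-(4 * t)) * (Real.exp 1 / 2) ^ 4)) t := by
  have a1 := (hasDerivAt_pow 4 t).const_mul (9:ℝ)
  have a2 := (hasDerivAt_pow 2 t).const_mul (6:ℝ)
  have h1 := (a1.add a2).add_const (9:ℝ)
  have h2 := ((hasDerivAt_id t).const_add (1:ℝ)).pow 4
  have h3 := (((hasDerivAt_id t).const_mul (4:ℝ)).neg).exp
  have h := h1.mul (h2.mul (h3.mul_const ((Real.exp 1 / 2) ^ 4)))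
  simp only [id_eq] at h
  refine h.congr_deriv ?_
  simp only [Pi.mul_apply, Pi.pow_apply, Pi.add_apply, Pi.neg_apply]
  norm_num
  ring

lemma Gcont : Continuous Gfun := by unfold Gfun; fun_prop

lemma exp4 (t : ℝ) : Real.exp (-(4 * t)) = (Real.exp t ^ 4)⁻¹ := by
  rw [Real.exp_neg, show (4:ℝ) * t = t + t + t + t by ring,
    Real.exp_add, Real.exp_add, Real.exp_add]
  ring_nf

lemma Gantitone : StrictAntiOn Gfun (Icc (0:ℝ) 1) := by
  apply strictAntiOn_of_deriv_neg (convex_Icc 0 1) Gcont.continuousOn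
  intro x hx
  rw [interior_Icc, mem_Ioo] at hx
  rw [(hasD x).deriv]
  have c1 : (0:ℝ) < 12 * x := by linarith
  have c2 : (0:ℝ) < (1 - x) ^ 2 := pow_pos (by linarith) 2
  have c3 : (0:ℝ) < 3 * x ^ 2 + 3 * x + 2 := by nlinarith
  have c4 : (0:ℝ) < (1 + x) ^ 3 := pow_pos (by linarith) 3
  have c5 : (0:ℝ) < Real.exp (-(4 * x)) * (Real.exp 1 / 2) ^ 4 := by positivity
  nlinarith [mul_pos (mul_pos (mul_pos (mul_pos c1 c2) c3) c4) c5]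

theorem stmt_12 {Ω : Type} [MeasurableSpace Ω] (P : Measure Ω) [IsProbabilityMeasure P]
    (E E' : Ω → ℝ) (hE : HasDensity P E expPDF) (hE' : HasDensity P E' expPDF)
    (hind : IndepFun E E' P)
    (μ : ℝ → ℝ) (hμ : ∀ t, μ t = (2 / Real.exp 1) * Real.exp t / (1 + t)) :
    StrictAntiOn
      (fun t => ∫ ω, (((E ω - 1) - t * (E' ω - 1)) / μ t) ^ 4 ∂P) (Set.Icc 0 1) ∧
    (∀ t ∈ Set.Icc (0 : ℝ) 1,
      (∫ ω, ((E ω - 1) - t * (E' ω - 1)) ^ 4 ∂P) = 9 * t ^ 4 + 6 * t ^ 2 + 9) ∧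
    (∀ t ∈ Set.Icc (0 : ℝ) 1,
      HasDerivAt (fun s => ∫ ω, (((E ω - 1) - s * (E' ω - 1)) / μ s) ^ 4 ∂P)
        (-12 * (t * (1 - t) ^ 2 / (μ t ^ 4 * (1 + t))) * (3 * t ^ 2 + 3 * t + 2)) t) := by
  have hfe : (fun t => ∫ ω, (((E ω - 1) - t * (E' ω - 1)) / μ t) ^ 4 ∂P) = Gfun := by
    funext t
    have h1 : ∫ ω, (((E ω - 1) - t * (E' ω - 1)) / μ t) ^ 4 ∂P
        = (∫ ω, ((E ω - 1) - t * (E' ω - 1)) ^ 4 ∂P) / μ t ^ 4 := by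
      simp_rw [div_pow]
      exact integral_div _ _
    rw [h1, keyA P E E' hE hE' hind t, hμ t]
    unfold Gfun
    by_cases ht : (1:ℝ) + t = 0
    · rw [ht]
      simp
    · have ha := Real.exp_ne_zero t
      have hb := Real.exp_ne_zero 1
      rw [exp4]
      field_simp
  refine ⟨?_, ?_, ?_⟩
  · rw [hfe]; exact Gantitone
  · intro t _; exact keyA P E E' hE hE' hind t
  · intro t ht
    rw [hfe]
    have h := hasD t
    have ht1 : (0:ℝ) < 1 + t := by have := ht.1; linarith
    have heq : -12 * (t * (1 - t) ^ 2 / (μ t ^ 4 * (1 + t))) * (3 * t ^ 2 + 3 * t + 2)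
        = (-12 * t * (1 - t) ^ 2 * (3 * t ^ 2 + 3 * t + 2) * (1 + t) ^ 3) *
          (Real.exp (-(4 * t)) * (Real.exp 1 / 2) ^ 4) := by
      rw [hμ t, exp4]
      have ha := Real.exp_ne_zero t
      have hb := Real.exp_ne_zero 1
      have ht' : (1:ℝ) + t ≠ 0 := ne_of_gt ht1
      field_simp
    rw [heq]
    exact h
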